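/- For any reported preference profile Q and tier structure t, the outcome of the tiered deferred acceptance mechanism under Q equals its outcome under the reshuffled profile Q̃, and also equals the outcome of the (untiered) deferred acceptance mechanism under Q̃; that is, TDA(t)(Q) = TDA(t)(Q̃) = DA(Q̃). -/

import Mathlib

set_option linter.unusedSectionVars false

namespace SchoolChoice

/-- A strict preference over `S ∪ {self}`, encoded by an injective ranking function on
`Option S`; `none` denotes being unmatched (the student himself), and a smaller rank
means more preferred. Injective rankings on a finite set are exactly strict linear orders. -/
structure Pref (S : Type) where
  rank : Option S → ℕ
  inj : Function.Injective rank

/-- Quotas together with strict priorities of the schools: `prank s` ranks the students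
at school `s`, a smaller rank meaning higher priority. -/
structure Prio (I S : Type) where
  quota : S → ℕ
  prank : S → I → ℕ
  inj : ∀ s, Function.Injective (prank s)

variable {I S : Type} [Fintype I] [Fintype S] [DecidableEq I] [DecidableEq S]

/-- `i` has strictly higher priority than `j` at school `s`. -/
def Prio.higher (E : Prio I S) (s : S) (i j : I) : Prop :=
  E.prank s i < E.prank s j

/-- A matching assigns to each student a school or himself (`none`). -/
abbrev Matching (I S : Type) := I → Option S

/-- The set of students assigned to school `s`. -/
def assigned (μ : Matching I S) (s : S) : Finset I :=
  Finset.univ.filter (fun i => μ i = some s)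

/-- Quotas are respected. -/
def Feasible (E : Prio I S) (μ : Matching I S) : Prop :=
  ∀ s, (assigned μ s).card ≤ E.quota s

/-- `(i, s)` is a blocking pair of `μ` with respect to preferences `R`:
`i` strictly prefers `s` to his assignment, and either `s` has an empty seat
(wastefulness) or some student assigned to `s` has lower priority than `i`
(justified envy). -/
def Blocks (E : Prio I S) (R : I → Pref S) (μ : Matching I S) (i : I) (s : S) : Prop :=
  (R i).rank (some s) < (R i).rank (μ i) ∧
    ((assigned μ s).card < E.quota s ∨ ∃ j, μ j = some s ∧ E.higher s i j)

/-- Individual rationality: every student weakly prefers his assignment to being unmatched. -/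
def IndivRat (R : I → Pref S) (μ : Matching I S) : Prop :=
  ∀ i, (R i).rank (μ i) ≤ (R i).rank none

/-- Non-wastefulness: no student prefers a school with an empty seat to his assignment. -/
def NonWasteful (E : Prio I S) (R : I → Pref S) (μ : Matching I S) : Prop :=
  ∀ i s, (R i).rank (some s) < (R i).rank (μ i) → E.quota s ≤ (assigned μ s).card

/-- Stability: feasible, individually rational, and no blocking pair
(no justified envy and non-wasteful). -/
def Stable (E : Prio I S) (R : I → Pref S) (μ : Matching I S) : Prop :=
  Feasible E μ ∧ IndivRat R μ ∧ ∀ i s, ¬ Blocks E R μ i s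

/-- The student-optimal stable matching for the (reported) preferences. -/
def StudentOptimal (E : Prio I S) (R : I → Pref S) (μ : Matching I S) : Prop :=
  Stable E R μ ∧ ∀ ν, Stable E R ν → ∀ i, (R i).rank (μ i) ≤ (R i).rank (ν i)

open Classical in
/-- The student-proposing deferred acceptance mechanism: by the Gale–Shapley theorem its
outcome is the (unique) student-optimal stable matching of the reported preferences. -/
noncomputable def DA (E : Prio I S) (R : I → Pref S) : Matching I S :=
  if h : ∃ μ, StudentOptimal E R μ then h.choose else fun _ => none

/-- A strict upper bound for the values of a ranking. -/
noncomputable def bnd (p : Pref S) : ℕ := (Finset.univ.sup p.rank) + 1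

lemma rank_lt_bnd (p : Pref S) (x : Option S) : p.rank x < bnd p :=
  Nat.lt_succ_of_le (Finset.le_sup (Finset.mem_univ x))

private lemma mul_add_lt {a K B r : ℕ} (ha : a ≤ K) (hr : r < B) :
    a * B + r < (K + 1) * B := by
  calc a * B + r < a * B + B := by omega
    _ = (a + 1) * B := by ring
    _ ≤ (K + 1) * B := Nat.mul_le_mul (by omega) le_rfl

/-- Is an alternative "inside the market" `A`?  `none` always is. -/
def goodB (A : S → Prop) [DecidablePred A] : Option S → Bool
  | none => true
  | some s => decide (A s)

/-- The preference truncated to the set of schools `A`: schools in `A` (and the outside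
option `none`) keep their relative order, while all schools outside `A` are pushed below
`none` (become unacceptable), keeping their relative order among themselves. -/
noncomputable def trunc (A : S → Prop) [DecidablePred A] (p : Pref S) : Pref S where
  rank x := (if goodB A x then 0 else bnd p) + p.rank x
  inj := by
    intro x y h
    by_cases hx : goodB A x <;> by_cases hy : goodB A y <;>
      simp only [hx, hy, if_true, if_false, Bool.false_eq_true, zero_add] at h
    · exact p.inj h
    · have := rank_lt_bnd p x; omega
    · have := rank_lt_bnd p y; omega
    · exact p.inj (by omega)

/-- The reshuffled preference with respect to a tier structure `t`: acceptable schools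
are grouped by tier in increasing tier order (keeping the original relative order within
each tier) above `none`, and all unacceptable schools are placed below `none`. -/
noncomputable def reshuffle (t : S → ℕ) (p : Pref S) : Pref S where
  rank x :=
    Option.elim x ((Finset.univ.sup t + 1) * bnd p)
      (fun s =>
        if p.rank (some s) < p.rank none then t s * bnd p + p.rank (some s)
        else (Finset.univ.sup t + 1) * bnd p + 1 + p.rank (some s))
  inj := by
    have hB : ∀ x, p.rank x < bnd p := rank_lt_bnd p
    have hK : ∀ s : S, t s ≤ Finset.univ.sup t := fun s => Finset.le_sup (Finset.mem_univ s)
    intro x y h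
    rcases x with _ | s <;> rcases y with _ | s' <;>
      simp only [Option.elim_none, Option.elim_some] at h
    · rfl
    · by_cases hy : p.rank (some s') < p.rank none <;> simp only [hy, if_true, if_false] at h
      · have := mul_add_lt (hK s') (hB (some s')); omega
      · omega
    · by_cases hx : p.rank (some s) < p.rank none <;> simp only [hx, if_true, if_false] at h
      · have := mul_add_lt (hK s) (hB (some s)); omega
      · omega
    · by_cases hx : p.rank (some s) < p.rank none <;>
        by_cases hy : p.rank (some s') < p.rank none <;>
        simp only [hx, hy, if_true, if_false] at h
      · have hts : t s = t s' := by
          rcases Nat.lt_trichotomy (t s) (t s') with h1 | h1 | h1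
          · have h2 : t s * bnd p + p.rank (some s) < t s' * bnd p + p.rank (some s') := by
              have h3 := mul_add_lt (a := t s) (K := t s' - 1) (B := bnd p) (by omega) (hB (some s))
              have h4 : (t s' - 1 + 1) * bnd p = t s' * bnd p := by congr 1; omega
              omega
            omega
          · exact h1
          · have h2 : t s' * bnd p + p.rank (some s') < t s * bnd p + p.rank (some s) := by
              have h3 := mul_add_lt (a := t s') (K := t s - 1) (B := bnd p) (by omega) (hB (some s'))
              have h4 : (t s - 1 + 1) * bnd p = t s * bnd p := by congr 1; omega
              omega
            omega
        rw [hts] at h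
        exact p.inj (by omega)
      · have := mul_add_lt (hK s) (hB (some s)); omega
      · have := mul_add_lt (hK s') (hB (some s')); omega
      · exact p.inj (by omega)

/-- A tier structure assigning each school a tier in `{1, …, T}`, each tier nonempty. -/
def IsTierStructure (t : S → ℕ) (T : ℕ) : Prop :=
  (∀ s, 1 ≤ t s ∧ t s ≤ T) ∧ ∀ k, 1 ≤ k → k ≤ T → ∃ s, t s = k

/-- Rounds `1, …, k` of the tiered deferred acceptance mechanism: in round `k` the
students left unmatched so far participate in the DA mechanism with their preferences
truncated to the tier-`k` schools (already matched students participate with nothing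
acceptable); students matched in earlier rounds keep their assignments. -/
noncomputable def TDAaux (E : Prio I S) (t : S → ℕ) (Q : I → Pref S) : ℕ → Matching I S
  | 0 => fun _ => none
  | k + 1 => fun i =>
      match TDAaux E t Q k i with
      | some s => some s
      | none =>
          DA E (fun j =>
            if TDAaux E t Q k j = none then trunc (fun s => t s = k + 1) (Q j)
            else trunc (fun _ => False) (Q j)) i

/-- The tiered deferred acceptance mechanism under tier structure `t`. -/
noncomputable def TDA (E : Prio I S) (t : S → ℕ) (Q : I → Pref S) : Matching I S :=
  TDAaux E t Q (Finset.univ.sup t)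

/-- `Q` is a (pure) Nash equilibrium of the preference revelation game induced by the
mechanism `f` when the true preferences are `R`: no student can obtain a school he truly
strictly prefers by unilaterally changing his report. -/
def NashEq (R : I → Pref S) (f : (I → Pref S) → Matching I S) (Q : I → Pref S) : Prop :=
  ∀ (i : I) (Qi' : Pref S),
    (R i).rank (f Q i) ≤ (R i).rank (f (Function.update Q i Qi') i)

/-- `μ` is a Nash equilibrium outcome of the revelation game induced by `f` at true
preferences `R`. -/
def NashOutcome (R : I → Pref S) (f : (I → Pref S) → Matching I S) (μ : Matching I S) : Prop :=
  ∃ Q, NashEq R f Q ∧ f Q = μ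

/-- The preference `p` is aligned with the tier structure `t`: a (weakly) more preferred
school always lies in a weakly earlier tier. -/
def AlignedPref (t : S → ℕ) (p : Pref S) : Prop :=
  ∀ s s' : S, p.rank (some s) ≤ p.rank (some s') → t s ≤ t s'

/-- `p` lists exactly the school in `o` (if any) as acceptable. -/
def OnlyAcceptable (p : Pref S) (o : Option S) : Prop :=
  ∀ s : S, (p.rank (some s) < p.rank none ↔ o = some s)

/-- An Ergin cycle of the priority structure among the schools in `A`. -/
def Cycle (E : Prio I S) (A : S → Prop) : Prop :=
  ∃ a b : S, A a ∧ A b ∧ a ≠ b ∧ ∃ i j k : I,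
    E.higher a i j ∧ E.higher a j k ∧ E.higher b k i ∧
    ∃ Ia Ib : Finset I, Disjoint Ia Ib ∧
      (∀ l ∈ Ia, l ≠ i ∧ l ≠ j ∧ l ≠ k ∧ E.higher a l j) ∧
      (∀ l ∈ Ib, l ≠ i ∧ l ≠ j ∧ l ≠ k ∧ E.higher b l i) ∧
      Ia.card = E.quota a - 1 ∧ Ib.card = E.quota b - 1

/-- Within-tier acyclicity of a generalized priority structure: no Ergin cycle among the
schools of any single tier. -/
def WithinTierAcyclic (E : Prio I S) (t : S → ℕ) : Prop :=
  ∀ k : ℕ, ¬ Cycle E (fun s => t s = k)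

/-- The (strict) preference `pr` of school `s` over sets of students is a responsive
extension of its priorities. -/
def Responsive (E : Prio I S) (s : S) (pr : Finset I → Finset I → Prop) : Prop :=
  ∀ (J : Finset I) (i j : I), i ∉ J → j ∉ J → E.higher s i j →
    pr (insert i J) (insert j J)

/-- `t` is a refinement of `t'`: `t'` ranks `a` in a strictly later tier than `b` only
if `t` does. -/
def Refines (t t' : S → ℕ) : Prop :=
  ∀ a b : S, t' b < t' a → t b < t a


/-! ### Auxiliary development: existence of the student-optimal stable matching -/

section GaleShapley

open Finset

variable (E : Prio I S) (P : I → Pref S)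

/-- Options still available to student `i` given the rejections `rej`. -/
def Opts (rej : Finset (I × S)) (i : I) : Finset (Option S) :=
  insert none ((Finset.univ.filter (fun s => (i, s) ∉ rej)).image some)

lemma none_mem_Opts (rej : Finset (I × S)) (i : I) : none ∈ Opts rej i :=
  Finset.mem_insert_self _ _

lemma some_mem_Opts {rej : Finset (I × S)} {i : I} {s : S} :
    some s ∈ Opts rej i ↔ (i, s) ∉ rej := by
  simp [Opts]

lemma Opts_antitone {rej rej' : Finset (I × S)} (h : rej ⊆ rej') (i : I) :
    Opts rej' i ⊆ Opts rej i := by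
  intro x hx
  cases x with
  | none => exact none_mem_Opts _ _
  | some s =>
    rw [some_mem_Opts] at hx ⊢
    exact fun hc => hx (h hc)

/-- The tentative proposal of student `i`: his favorite available option. -/
noncomputable def chooseFn (rej : Finset (I × S)) (i : I) : Option S :=
  (Finset.exists_min_image (Opts rej i) (fun x => (P i).rank x)
    ⟨none, none_mem_Opts rej i⟩).choose

lemma chooseFn_mem (rej : Finset (I × S)) (i : I) : chooseFn P rej i ∈ Opts rej i :=
  (Finset.exists_min_image (Opts rej i) (fun x => (P i).rank x)
    ⟨none, none_mem_Opts rej i⟩).choose_spec.1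

lemma chooseFn_min (rej : Finset (I × S)) (i : I) :
    ∀ x ∈ Opts rej i, (P i).rank (chooseFn P rej i) ≤ (P i).rank x :=
  (Finset.exists_min_image (Opts rej i) (fun x => (P i).rank x)
    ⟨none, none_mem_Opts rej i⟩).choose_spec.2

lemma chooseFn_some_not_mem {rej : Finset (I × S)} {i : I} {s : S}
    (h : chooseFn P rej i = some s) : (i, s) ∉ rej :=
  some_mem_Opts.mp (h ▸ chooseFn_mem P rej i)

lemma chooseFn_stable {rej rej' : Finset (I × S)} (hsub : rej ⊆ rej') {i : I}
    (h : chooseFn P rej i ∈ Opts rej' i) : chooseFn P rej' i = chooseFn P rej i :=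
  (P i).inj (le_antisymm (chooseFn_min P rej' i _ h)
    (chooseFn_min P rej i _ (Opts_antitone hsub i (chooseFn_mem P rej' i))))

instance (E : Prio I S) (s : S) (i j : I) : Decidable (E.higher s i j) :=
  decidable_of_iff (E.prank s i < E.prank s j) Iff.rfl

/-- Students currently proposing to `s`. -/
noncomputable def pool (rej : Finset (I × S)) (s : S) : Finset I :=
  Finset.univ.filter (fun j => chooseFn P rej j = some s)

lemma mem_pool {rej : Finset (I × S)} {s : S} {j : I} :
    j ∈ pool P rej s ↔ chooseFn P rej j = some s := by
  simp [pool]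

/-- The invariant maintained by deferred acceptance. -/
def Inv (rej : Finset (I × S)) : Prop :=
  (∀ i s, (i, s) ∈ rej →
      E.quota s ≤ ((pool P rej s).filter (fun j => E.higher s j i)).card) ∧
  (∀ ν, Stable E P ν → ∀ i s, (i, s) ∈ rej → ν i ≠ some s)

lemma stable_mem_Opts {rej : Finset (I × S)}
    (hInv : ∀ ν, Stable E P ν → ∀ i s, (i, s) ∈ rej → ν i ≠ some s)
    {ν : Matching I S} (hν : Stable E P ν) (i : I) : ν i ∈ Opts rej i := by
  cases hv : ν i with
  | none => exact none_mem_Opts _ _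
  | some s => exact some_mem_Opts.mpr (fun hmem => hInv ν hν i s hmem hv)

lemma Inv_step {rej : Finset (I × S)} (hInv : Inv E P rej) {s : S}
    (hq : E.quota s < (pool P rej s).card) :
    ∃ i, (i, s) ∉ rej ∧ Inv E P (insert (i, s) rej) := by
  have hne : (pool P rej s).Nonempty := Finset.card_pos.mp (Nat.lt_of_le_of_lt (Nat.zero_le _) hq)
  obtain ⟨i₀, hi₀, hmax⟩ := Finset.exists_max_image (pool P rej s) (fun j => E.prank s j) hne
  have hi₀c : chooseFn P rej i₀ = some s := (mem_pool P).mp hi₀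
  have hnotin : (i₀, s) ∉ rej := chooseFn_some_not_mem P hi₀c
  have hpool : ∀ s' j, j ∈ pool P rej s' → ¬(j = i₀ ∧ s' = s) →
      j ∈ pool P (insert (i₀, s) rej) s' := by
    intro s' j hj hne'
    have hc : chooseFn P rej j = some s' := (mem_pool P).mp hj
    have hmem : chooseFn P rej j ∈ Opts (insert (i₀, s) rej) j := by
      rw [hc, some_mem_Opts, Finset.mem_insert]
      push_neg
      refine ⟨fun hh => ?_, fun hh => (chooseFn_some_not_mem P hc) hh⟩
      · have h1 : j = i₀ := congrArg Prod.fst hh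
        have h2 : s' = s := congrArg Prod.snd hh
        exact hne' ⟨h1, h2⟩
    exact (mem_pool P).mpr (by rw [chooseFn_stable P (Finset.subset_insert _ _) hmem, hc])
  refine ⟨i₀, hnotin, ?_, ?_⟩
  · -- first invariant
    intro i s'' hmem
    rcases Finset.mem_insert.mp hmem with heq | hold
    · have hieq : i = i₀ := congrArg Prod.fst heq
      have hseq : s'' = s := congrArg Prod.snd heq
      rw [hieq, hseq]
      have hsub : (pool P rej s).erase i₀ ⊆
          (pool P (insert (i₀, s) rej) s).filter (fun j => E.higher s j i₀) := by
        intro j hj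
        have hjne : j ≠ i₀ := Finset.ne_of_mem_erase hj
        have hjp : j ∈ pool P rej s := Finset.mem_of_mem_erase hj
        refine Finset.mem_filter.mpr ⟨hpool s j hjp (fun hc => hjne hc.1), ?_⟩
        have hle : E.prank s j ≤ E.prank s i₀ := hmax j hjp
        have hne2 : E.prank s j ≠ E.prank s i₀ := fun hc => hjne (E.inj s hc)
        exact lt_of_le_of_ne hle hne2
      have hcard := Finset.card_le_card hsub
      rw [Finset.card_erase_of_mem hi₀] at hcard
      omega
    · have h1 := hInv.1 i s'' hold
      by_cases hcase : s'' = s ∧ E.higher s'' i₀ i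
      · obtain ⟨hseq, hhi⟩ := hcase
        have hsub : (pool P rej s'').erase i₀ ⊆
            (pool P (insert (i₀, s) rej) s'').filter (fun j => E.higher s'' j i) := by
          intro j hj
          have hjne : j ≠ i₀ := Finset.ne_of_mem_erase hj
          have hjp : j ∈ pool P rej s'' := Finset.mem_of_mem_erase hj
          refine Finset.mem_filter.mpr ⟨hpool s'' j hjp (fun hc => hjne hc.1), ?_⟩
          have hle : E.prank s'' j ≤ E.prank s'' i₀ := by rw [hseq] at hjp ⊢; exact hmax j hjp
          have hne2 : E.prank s'' j ≠ E.prank s'' i₀ := fun hc => hjne (E.inj s'' hc)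
          have : E.prank s'' j < E.prank s'' i₀ := lt_of_le_of_ne hle hne2
          exact lt_trans this hhi
        have hcard := Finset.card_le_card hsub
        have hi₀' : i₀ ∈ pool P rej s'' := by rw [hseq]; exact hi₀
        rw [Finset.card_erase_of_mem hi₀'] at hcard
        have hq' : E.quota s'' < (pool P rej s'').card := by rw [hseq]; exact hq
        omega
      · have hsub : (pool P rej s'').filter (fun j => E.higher s'' j i) ⊆
            (pool P (insert (i₀, s) rej) s'').filter (fun j => E.higher s'' j i) := by
          intro j hj
          obtain ⟨hjp, hjh⟩ := Finset.mem_filter.mp hj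
          refine Finset.mem_filter.mpr ⟨hpool s'' j hjp ?_, hjh⟩
          rintro ⟨rfl, rfl⟩
          exact hcase ⟨rfl, hjh⟩
        have hcard := Finset.card_le_card hsub
        omega
  · -- second invariant
    intro ν hν i s'' hmem
    rcases Finset.mem_insert.mp hmem with heq | hold
    · have hieq : i = i₀ := congrArg Prod.fst heq
      have hseq : s'' = s := congrArg Prod.snd heq
      rw [hieq, hseq]
      intro hcontra
      have hex : ∃ j ∈ pool P rej s, ν j ≠ some s := by
        by_contra hall
        push_neg at hall
        have hsub : pool P rej s ⊆ assigned ν s := by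
          intro j hj
          simp only [assigned, Finset.mem_filter, Finset.mem_univ, true_and]
          exact hall j hj
        have := Finset.card_le_card hsub
        have := hν.1 s
        omega
      obtain ⟨j, hjp, hjne⟩ := hex
      have hjne₀ : j ≠ i₀ := fun h => hjne (h ▸ hcontra)
      have hνj : ν j ∈ Opts rej j := stable_mem_Opts E P hInv.2 hν j
      have hle : (P j).rank (some s) ≤ (P j).rank (ν j) := by
        have := chooseFn_min P rej j (ν j) hνj
        rwa [(mem_pool P).mp hjp] at this
      have hlt : (P j).rank (some s) < (P j).rank (ν j) :=
        lt_of_le_of_ne hle (fun hc => hjne ((P j).inj hc).symm)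
      refine hν.2.2 j s ⟨hlt, Or.inr ⟨i₀, hcontra, ?_⟩⟩
      have hle2 : E.prank s j ≤ E.prank s i₀ := hmax j hjp
      exact lt_of_le_of_ne hle2 (fun hc => hjne₀ (E.inj s hc))
    · exact hInv.2 ν hν i s'' hold

lemma exists_fixrej :
    ∀ (n : ℕ) (rej : Finset (I × S)), Inv E P rej →
      Fintype.card (I × S) ≤ rej.card + n →
      ∃ rej', Inv E P rej' ∧ ∀ s, (pool P rej' s).card ≤ E.quota s := by
  intro n
  induction n with
  | zero =>
    intro rej hInv hcard
    refine ⟨rej, hInv, fun s => ?_⟩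
    have huniv : rej = Finset.univ := by
      apply Finset.eq_univ_of_card
      have := Finset.card_le_univ rej
      omega
    have hempty : pool P rej s = ∅ := by
      apply Finset.eq_empty_of_forall_notMem
      intro j hj
      exact chooseFn_some_not_mem P ((mem_pool P).mp hj) (huniv ▸ Finset.mem_univ _)
    rw [hempty]
    simp
  | succ n ih =>
    intro rej hInv hcard
    by_cases h : ∃ s, E.quota s < (pool P rej s).card
    · obtain ⟨s, hs⟩ := h
      obtain ⟨i, hnew, hInv'⟩ := Inv_step E P hInv hs
      exact ih _ hInv' (by rw [Finset.card_insert_of_notMem hnew]; omega)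
    · push_neg at h
      exact ⟨rej, hInv, h⟩

theorem exists_studentOptimal : ∃ μ, StudentOptimal E P μ := by
  obtain ⟨rej, hInv, hfeas⟩ := exists_fixrej E P (Fintype.card (I × S)) ∅
    ⟨by simp, by simp⟩ (by simp)
  have hassigned : ∀ s, assigned (fun i => chooseFn P rej i) s = pool P rej s := by
    intro s; rfl
  refine ⟨fun i => chooseFn P rej i, ⟨?_, ?_, ?_⟩, ?_⟩
  · intro s
    rw [hassigned]
    exact hfeas s
  · intro i
    exact chooseFn_min P rej i none (none_mem_Opts rej i)
  · rintro i s ⟨h1, h2⟩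
    beta_reduce at h1
    have hrej : (i, s) ∈ rej := by
      by_contra hc
      have := chooseFn_min P rej i (some s) (some_mem_Opts.mpr hc)
      omega
    have hw := hInv.1 i s hrej
    have hfs := hfeas s
    have hWsub := Finset.filter_subset (fun j => E.higher s j i) (pool P rej s)
    have hWcard := Finset.card_le_card hWsub
    have hpool_eq : (pool P rej s).filter (fun j => E.higher s j i) = pool P rej s :=
      Finset.eq_of_subset_of_card_le hWsub (by omega)
    rcases h2 with hvac | ⟨j, hj, hij⟩
    · rw [hassigned] at hvac
      omega
    · have hjp : j ∈ pool P rej s := (mem_pool P).mpr hj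
      have : j ∈ (pool P rej s).filter (fun j => E.higher s j i) := by rw [hpool_eq]; exact hjp
      have hji : E.higher s j i := (Finset.mem_filter.mp this).2
      unfold Prio.higher at hij hji
      omega
  · intro ν hν i
    exact chooseFn_min P rej i (ν i) (stable_mem_Opts E P hInv.2 hν i)

end GaleShapley

/-! ### Properties of `DA` -/

lemma StudentOptimal.unique {E : Prio I S} {P : I → Pref S} {μ ν : Matching I S}
    (h1 : StudentOptimal E P μ) (h2 : StudentOptimal E P ν) : μ = ν :=
  funext fun i => (P i).inj (le_antisymm (h1.2 ν h2.1 i) (h2.2 μ h1.1 i))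

lemma DA_SO (E : Prio I S) (P : I → Pref S) : StudentOptimal E P (DA E P) := by
  rw [DA, dif_pos (exists_studentOptimal E P)]
  exact (exists_studentOptimal E P).choose_spec

lemma DA_eq_of_SO {E : Prio I S} {P : I → Pref S} {μ : Matching I S}
    (h : StudentOptimal E P μ) : DA E P = μ :=
  StudentOptimal.unique (DA_SO E P) h

/-- Two preferences agree on the set of acceptable alternatives and on the order among
them (together with the outside option). -/
def EquivAcc (p q : Pref S) : Prop :=
  (∀ x, p.rank x ≤ p.rank none ↔ q.rank x ≤ q.rank none) ∧
  (∀ x y, p.rank x ≤ p.rank none → p.rank y ≤ p.rank none →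
    (p.rank x ≤ p.rank y ↔ q.rank x ≤ q.rank y))

lemma EquivAcc.symm {p q : Pref S} (h : EquivAcc p q) : EquivAcc q p :=
  ⟨fun x => (h.1 x).symm,
   fun x y hx hy => ((h.2 x y ((h.1 x).mpr hx) ((h.1 y).mpr hy))).symm⟩

lemma Stable.of_equivAcc {E : Prio I S} {P P' : I → Pref S} {μ : Matching I S}
    (h : ∀ i, EquivAcc (P i) (P' i)) (hst : Stable E P μ) : Stable E P' μ := by
  refine ⟨hst.1, fun i => ((h i).1 (μ i)).mp (hst.2.1 i), ?_⟩
  rintro i s ⟨hlt, hor⟩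
  apply hst.2.2 i s
  have hIRp : (P i).rank (μ i) ≤ (P i).rank none := hst.2.1 i
  have hIRq : (P' i).rank (μ i) ≤ (P' i).rank none := ((h i).1 (μ i)).mp hIRp
  have hsq : (P' i).rank (some s) ≤ (P' i).rank none := le_trans hlt.le hIRq
  have hsp : (P i).rank (some s) ≤ (P i).rank none := ((h i).1 (some s)).mpr hsq
  have hiff := (h i).2 (μ i) (some s) hIRp hsp
  refine ⟨?_, hor⟩
  have h1 : ¬ (P' i).rank (μ i) ≤ (P' i).rank (some s) := by omega
  have h2 : ¬ (P i).rank (μ i) ≤ (P i).rank (some s) := fun hc => h1 (hiff.mp hc)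
  omega

lemma StudentOptimal.of_equivAcc {E : Prio I S} {P P' : I → Pref S} {μ : Matching I S}
    (h : ∀ i, EquivAcc (P i) (P' i)) (hSO : StudentOptimal E P μ) :
    StudentOptimal E P' μ := by
  refine ⟨hSO.1.of_equivAcc h, fun ν hν i => ?_⟩
  have hνP : Stable E P ν := hν.of_equivAcc (fun i => (h i).symm)
  have hle := hSO.2 ν hνP i
  exact ((h i).2 (μ i) (ν i) (hSO.1.2.1 i) (hνP.2.1 i)).mp hle

lemma DA_congr {E : Prio I S} {P P' : I → Pref S}
    (h : ∀ i, EquivAcc (P i) (P' i)) : DA E P = DA E P' :=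
  StudentOptimal.unique (DA_SO E P) ((DA_SO E P').of_equivAcc (fun i => (h i).symm))

/-! ### Matched students across stable matchings -/

lemma mem_assigned {μ : Matching I S} {s : S} {j : I} :
    j ∈ assigned μ s ↔ μ j = some s := by simp [assigned]

lemma card_matched (μ : Matching I S) :
    (Finset.univ.filter fun i => μ i ≠ none).card = ∑ s, (assigned μ s).card := by
  classical
  rw [Finset.card_eq_sum_card_fiberwise
    (f := μ) (t := Finset.univ.image some)
    (fun x hx => by
      rcases Option.ne_none_iff_exists'.mp ((Finset.mem_filter.mp hx).2) with ⟨s, hs⟩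
      exact Finset.mem_image.mpr ⟨s, Finset.mem_univ s, hs.symm⟩)]
  rw [Finset.sum_image (fun x _ y _ h => Option.some_inj.mp h)]
  apply Finset.sum_congr rfl
  intro s _
  congr 1
  ext j
  simp only [Finset.mem_filter, Finset.mem_univ, true_and, mem_assigned]
  constructor
  · exact fun h => h.2
  · intro h; exact ⟨by simp [h], h⟩

lemma SO_matched_iff {E : Prio I S} {P : I → Pref S} {μ ν : Matching I S}
    (hμ : StudentOptimal E P μ) (hν : Stable E P ν) (i : I) :
    μ i = none ↔ ν i = none := by
  have heasy : ∀ j, μ j = none → ν j = none := by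
    intro j hj
    have h1 := hμ.2 ν hν j
    rw [hj] at h1
    have h2 := hν.2.1 j
    exact (P j).inj (le_antisymm h2 h1)
  refine ⟨heasy i, fun hi => ?_⟩
  by_contra hne
  have hsub : Finset.univ.filter (fun j => ν j ≠ none) ⊆
      Finset.univ.filter (fun j => μ j ≠ none) := by
    intro j hj
    simp only [Finset.mem_filter, Finset.mem_univ, true_and] at hj ⊢
    exact fun hc => hj (heasy j hc)
  have hss : Finset.univ.filter (fun j => ν j ≠ none) ⊂
      Finset.univ.filter (fun j => μ j ≠ none) := by
    refine Finset.ssubset_iff_of_subset hsub |>.mpr ⟨i, ?_, ?_⟩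
    · simp only [Finset.mem_filter, Finset.mem_univ, true_and]; exact hne
    · simp only [Finset.mem_filter, Finset.mem_univ, true_and, not_not]; exact hi
  have hcard := Finset.card_lt_card hss
  rw [card_matched, card_matched] at hcard
  have hex : ∃ s, (assigned ν s).card < (assigned μ s).card := by
    by_contra hall
    push_neg at hall
    have hle : ∑ s, (assigned μ s).card ≤ ∑ s, (assigned ν s).card :=
      Finset.sum_le_sum (fun s _ => hall s)
    omega
  obtain ⟨s₁, hs₁⟩ := hex
  have hquota : (assigned μ s₁).card ≤ E.quota s₁ := hμ.1.1 s₁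
  have hnsub : ¬ assigned μ s₁ ⊆ assigned ν s₁ := by
    intro hc
    exact absurd (Finset.card_le_card hc) (by omega)
  obtain ⟨j, hj1, hj2⟩ := Finset.not_subset.mp hnsub
  have hμj : μ j = some s₁ := mem_assigned.mp hj1
  have hνj : ν j ≠ some s₁ := fun hc => hj2 (mem_assigned.mpr hc)
  have hdom := hμ.2 ν hν j
  rw [hμj] at hdom
  have hlt : (P j).rank (some s₁) < (P j).rank (ν j) :=
    lt_of_le_of_ne hdom (fun hc => hνj ((P j).inj hc).symm)
  exact hν.2.2 j s₁ ⟨hlt, Or.inl (by omega)⟩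

/-! ### Rank computations for `trunc` and `reshuffle` -/

lemma rank_some_lt_none_of_le (p : Pref S) {s : S}
    (h : p.rank (some s) ≤ p.rank none) : p.rank (some s) < p.rank none :=
  lt_of_le_of_ne h (fun he => by simpa using p.inj he)

private lemma key_mul {a b r r' B : ℕ} (hab : a < b) (hr : r < B) :
    a * B + r < b * B + r' := by
  have h1 : (a + 1) * B ≤ b * B := Nat.mul_le_mul_right _ (by omega)
  have h2 : (a + 1) * B = a * B + B := by ring
  omega

@[simp] lemma goodB_none {A : S → Prop} [DecidablePred A] : goodB A none = true := rfl

@[simp] lemma goodB_some {A : S → Prop} [DecidablePred A] {s : S} :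
    goodB A (some s) = decide (A s) := rfl

lemma trunc_rank_none (A : S → Prop) [DecidablePred A] (p : Pref S) :
    (trunc A p).rank none = p.rank none := by
  simp [trunc]

lemma trunc_rank_good {A : S → Prop} [DecidablePred A] (p : Pref S) {s : S} (h : A s) :
    (trunc A p).rank (some s) = p.rank (some s) := by
  simp [trunc, h]

lemma trunc_rank_bad {A : S → Prop} [DecidablePred A] (p : Pref S) {s : S} (h : ¬ A s) :
    (trunc A p).rank (some s) = bnd p + p.rank (some s) := by
  simp [trunc, h]

lemma trunc_acc_iff {A : S → Prop} [DecidablePred A] (p : Pref S) {s : S} :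
    (trunc A p).rank (some s) ≤ (trunc A p).rank none ↔
      (A s ∧ p.rank (some s) < p.rank none) := by
  by_cases hA : A s
  · rw [trunc_rank_good p hA, trunc_rank_none]
    have hne : p.rank (some s) ≠ p.rank none := fun he => by simpa using p.inj he
    constructor
    · intro h; exact ⟨hA, lt_of_le_of_ne h hne⟩
    · intro h; exact h.2.le
  · rw [trunc_rank_bad p hA, trunc_rank_none]
    have := rank_lt_bnd p none
    constructor
    · intro h; omega
    · intro h; exact absurd h.1 hA

lemma resh_rank_none (t : S → ℕ) (p : Pref S) :
    (reshuffle t p).rank none = (Finset.univ.sup t + 1) * bnd p := rfl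

lemma resh_rank_acc (t : S → ℕ) (p : Pref S) {s : S}
    (h : p.rank (some s) < p.rank none) :
    (reshuffle t p).rank (some s) = t s * bnd p + p.rank (some s) := by
  simp [reshuffle, h]

lemma resh_rank_nacc (t : S → ℕ) (p : Pref S) {s : S}
    (h : ¬ p.rank (some s) < p.rank none) :
    (reshuffle t p).rank (some s) =
      (Finset.univ.sup t + 1) * bnd p + 1 + p.rank (some s) := by
  simp [reshuffle, h]

lemma resh_lt_none (t : S → ℕ) (p : Pref S) {s : S}
    (h : p.rank (some s) < p.rank none) :
    (reshuffle t p).rank (some s) < (reshuffle t p).rank none := by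
  rw [resh_rank_acc t p h, resh_rank_none]
  have := key_mul (a := t s) (b := Finset.univ.sup t + 1) (r := p.rank (some s)) (r' := 0)
    (Nat.lt_succ_of_le (Finset.le_sup (Finset.mem_univ s))) (rank_lt_bnd p (some s))
  omega

lemma resh_acc_iff (t : S → ℕ) (p : Pref S) {s : S} :
    (reshuffle t p).rank (some s) ≤ (reshuffle t p).rank none ↔
      p.rank (some s) < p.rank none := by
  constructor
  · intro h
    by_contra hc
    rw [resh_rank_nacc t p hc, resh_rank_none] at h
    omega
  · intro h
    exact (resh_lt_none t p h).le

lemma resh_le_iff (t : S → ℕ) (p : Pref S) {s s' : S}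
    (hs : p.rank (some s) < p.rank none) (hs' : p.rank (some s') < p.rank none) :
    ((reshuffle t p).rank (some s) ≤ (reshuffle t p).rank (some s')) ↔
      (t s < t s' ∨ (t s = t s' ∧ p.rank (some s) ≤ p.rank (some s'))) := by
  rw [resh_rank_acc t p hs, resh_rank_acc t p hs']
  have h1 := rank_lt_bnd p (some s)
  have h2 := rank_lt_bnd p (some s')
  rcases lt_trichotomy (t s) (t s') with h | h | h
  · have := key_mul (r := p.rank (some s)) (r' := p.rank (some s')) h h1
    constructor
    · intro _; exact Or.inl h
    · intro _; omega
  · rw [h]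
    constructor
    · intro hle; exact Or.inr ⟨rfl, by omega⟩
    · rintro (hc | ⟨_, hc⟩); · omega
      · omega
  · have := key_mul (r := p.rank (some s')) (r' := p.rank (some s)) h h2
    constructor
    · intro hle; omega
    · rintro (hc | ⟨hc, _⟩) <;> omega

/-! ### The `EquivAcc` instances we need -/

lemma equivAcc_truncFalse (p p' : Pref S) :
    EquivAcc (trunc (fun _ : S => False) p) (trunc (fun _ : S => False) p') := by
  constructor
  · intro x
    cases x with
    | none => simp
    | some s =>
      rw [trunc_acc_iff, trunc_acc_iff]
      simp
  · intro x y hx hy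
    cases x with
    | none =>
      cases y with
      | none => simp
      | some s => rw [trunc_acc_iff] at hy; simp at hy
    | some s => rw [trunc_acc_iff] at hx; simp at hx

lemma equivAcc_trunc_resh (t : S → ℕ) (m : ℕ) (p : Pref S) :
    EquivAcc (trunc (fun s => t s = m) p) (trunc (fun s => t s = m) (reshuffle t p)) := by
  have hacc : ∀ s : S,
      ((reshuffle t p).rank (some s) < (reshuffle t p).rank none ↔
        p.rank (some s) < p.rank none) := by
    intro s
    constructor
    · intro h; exact (resh_acc_iff t p).mp h.le
    · intro h; exact resh_lt_none t p h
  constructor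
  · intro x
    cases x with
    | none => simp
    | some s =>
      rw [trunc_acc_iff, trunc_acc_iff, hacc s]
  · intro x y hx hy
    cases x with
    | none =>
      cases y with
      | none => simp
      | some s =>
        rw [trunc_acc_iff] at hy
        obtain ⟨hts, haccs⟩ := hy
        rw [trunc_rank_none, trunc_rank_none, trunc_rank_good p hts,
          trunc_rank_good (reshuffle t p) hts]
        constructor
        · intro h; omega
        · intro h
          have := resh_lt_none t p haccs
          omega
    | some s =>
      rw [trunc_acc_iff] at hx
      obtain ⟨hts, haccs⟩ := hx
      cases y with
      | none =>
        rw [trunc_rank_none, trunc_rank_none, trunc_rank_good p hts,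
          trunc_rank_good (reshuffle t p) hts]
        constructor
        · intro _; exact ((resh_acc_iff t p).mpr haccs)
        · intro _; exact haccs.le
      | some s' =>
        rw [trunc_acc_iff] at hy
        obtain ⟨hts', haccs'⟩ := hy
        rw [trunc_rank_good p hts, trunc_rank_good p hts', trunc_rank_good (reshuffle t p) hts,
          trunc_rank_good (reshuffle t p) hts']
        rw [resh_le_iff t p haccs haccs']
        constructor
        · intro h; exact Or.inr ⟨by omega, h⟩
        · rintro (h | ⟨_, h⟩)
          · omega
          · exact h

lemma equivAcc_resh_resh (t : S → ℕ) (p : Pref S) :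
    EquivAcc (reshuffle t (reshuffle t p)) (reshuffle t p) := by
  have hacc : ∀ s : S,
      ((reshuffle t p).rank (some s) < (reshuffle t p).rank none ↔
        p.rank (some s) < p.rank none) := by
    intro s
    constructor
    · intro h; exact (resh_acc_iff t p).mp h.le
    · intro h; exact resh_lt_none t p h
  constructor
  · intro x
    cases x with
    | none => simp
    | some s => rw [resh_acc_iff, resh_acc_iff, hacc s]
  · intro x y hx hy
    cases x with
    | none =>
      cases y with
      | none => simp
      | some s =>
        rw [resh_acc_iff] at hy
        have hyp : p.rank (some s) < p.rank none := (hacc s).mp hy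
        have h1 := resh_lt_none (t := t) (p := reshuffle t p) hy
        constructor
        · intro h; omega
        · intro h; omega
    | some s =>
      rw [resh_acc_iff] at hx
      have hxp : p.rank (some s) < p.rank none := (hacc s).mp hx
      cases y with
      | none =>
        have h1 := resh_lt_none (t := t) (p := reshuffle t p) hx
        constructor
        · intro _; exact hx.le
        · intro _; exact h1.le
      | some s' =>
        rw [resh_acc_iff] at hy
        have hyp : p.rank (some s') < p.rank none := (hacc s').mp hy
        rw [resh_le_iff t (reshuffle t p) hx hy, resh_le_iff t p hxp hyp]
        omega

/-! ### The main lemma: `TDA` equals `DA` of the reshuffled profile -/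

theorem TDA_eq_DA_resh (E : Prio I S) (t : S → ℕ) (Q : I → Pref S)
    (ht1 : ∀ s, 1 ≤ t s) :
    TDA E t Q = DA E (fun i => reshuffle t (Q i)) := by
  set μ := DA E (fun i => reshuffle t (Q i)) with hμdef
  have hSO : StudentOptimal E (fun i => reshuffle t (Q i)) μ := DA_SO E _
  have hμFeas := hSO.1.1
  have hμIR := hSO.1.2.1
  have hμNB := hSO.1.2.2
  have F6 : ∀ j s', μ j = some s' → (Q j).rank (some s') < (Q j).rank none := by
    intro j s' hm
    have h := hμIR j
    rw [hm] at h
    exact (resh_acc_iff t (Q j)).mp h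
  have key : ∀ k i s, TDAaux E t Q k i = some s ↔ (μ i = some s ∧ t s ≤ k) := by
    intro k
    induction k with
    | zero =>
      intro i s
      constructor
      · intro h; exact absurd h (by simp [TDAaux])
      · rintro ⟨_, h⟩; have := ht1 s; omega
    | succ k IH =>
      set R : I → Pref S := fun j =>
        if TDAaux E t Q k j = none then trunc (fun s => t s = k + 1) (Q j)
        else trunc (fun _ => False) (Q j) with hRdef
      set ν : Matching I S := fun j =>
        match μ j with
        | some s' => if t s' = k + 1 then some s' else none
        | none => none with hνdef
      have F3 : ∀ j s', ν j = some s' ↔ (μ j = some s' ∧ t s' = k + 1) := by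
        intro j s'
        cases hm : μ j with
        | none => simp [hνdef, hm]
        | some s'' =>
          by_cases hts : t s'' = k + 1
          · simp only [hνdef, hm, if_pos hts]
            constructor
            · intro h
              have h2 := h
              injection h with h'
              rw [h'] at hts
              exact ⟨h2, hts⟩
            · rintro ⟨h, _⟩; exact h
          · simp only [hνdef, hm, if_neg hts]
            constructor
            · intro h; exact absurd h (by simp)
            · rintro ⟨h, hts'⟩
              injection h with h'
              exact absurd (h' ▸ hts') hts
      have F2 : ∀ i s', TDAaux E t Q k i = none → μ i = some s' → k + 1 ≤ t s' := by
        intro i s' hk hm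
        by_contra hc
        push_neg at hc
        have := (IH i s').mpr ⟨hm, by omega⟩
        rw [hk] at this
        exact absurd this (by simp)
      have F4 : ∀ j s', ν j = some s' → TDAaux E t Q k j = none := by
        intro j s' h
        obtain ⟨hm, hts⟩ := (F3 j s').mp h
        cases hk : TDAaux E t Q k j with
        | none => rfl
        | some s'' =>
          obtain ⟨hm2, hts2⟩ := (IH j s'').mp hk
          rw [hm] at hm2
          injection hm2 with h'
          rw [← h'] at hts2
          omega
      have hRpart : ∀ j, TDAaux E t Q k j = none →
          R j = trunc (fun s => t s = k + 1) (Q j) := by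
        intro j h; simp [hRdef, h]
      have hRnon : ∀ j, ¬ TDAaux E t Q k j = none →
          R j = trunc (fun _ : S => False) (Q j) := by
        intro j h; simp [hRdef, h]
      have F5a : ∀ s', t s' = k + 1 → assigned ν s' = assigned μ s' := by
        intro s' h; ext j
        rw [mem_assigned, mem_assigned, F3 j s']
        exact ⟨fun hh => hh.1, fun hh => ⟨hh, h⟩⟩
      have F5b : ∀ s', t s' ≠ k + 1 → assigned ν s' = ∅ := by
        intro s' h
        apply Finset.eq_empty_of_forall_notMem
        intro j hj
        exact h ((F3 j s').mp (mem_assigned.mp hj)).2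
      have hIRν : IndivRat R ν := by
        intro j
        cases hv : ν j with
        | none => exact le_refl _
        | some s' =>
          have hpart := F4 j s' hv
          obtain ⟨hm, hts⟩ := (F3 j s').mp hv
          rw [hRpart j hpart, trunc_rank_good (Q j) hts, trunc_rank_none]
          exact (F6 j s' hm).le
      have hstable : Stable E R ν := by
        refine ⟨?_, hIRν, ?_⟩
        · intro s'
          by_cases h : t s' = k + 1
          · rw [F5a s' h]; exact hμFeas s'
          · rw [F5b s' h]; simp
        · rintro i s₀ ⟨hlt, hor⟩
          by_cases hpart : TDAaux E t Q k i = none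
          · rw [hRpart i hpart] at hlt
            have hup : (trunc (fun s => t s = k+1) (Q i)).rank (ν i) ≤
                (trunc (fun s => t s = k+1) (Q i)).rank none := by
              have := hIRν i; rwa [hRpart i hpart] at this
            obtain ⟨hts₀, hacc₀⟩ := (trunc_acc_iff (Q i)).mp (le_trans hlt.le hup)
            have hQlt : (reshuffle t (Q i)).rank (some s₀) <
                (reshuffle t (Q i)).rank (μ i) := by
              cases hv : ν i with
              | some s₁ =>
                obtain ⟨hm₁, hts₁⟩ := (F3 i s₁).mp hv
                have hacc₁ := F6 i s₁ hm₁
                rw [hv, trunc_rank_good (Q i) hts₀, trunc_rank_good (Q i) hts₁] at hlt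
                rw [hm₁, resh_rank_acc t (Q i) hacc₀, resh_rank_acc t (Q i) hacc₁,
                  hts₀, hts₁]
                omega
              | none =>
                cases hm : μ i with
                | none => exact resh_lt_none t (Q i) hacc₀
                | some s₂ =>
                  have hacc₂ := F6 i s₂ hm
                  have ht₂ := F2 i s₂ hpart hm
                  have hne₂ : t s₂ ≠ k + 1 := by
                    intro hc
                    have := (F3 i s₂).mpr ⟨hm, hc⟩
                    rw [hv] at this
                    exact absurd this (by simp)
                  rw [resh_rank_acc t (Q i) hacc₀, resh_rank_acc t (Q i) hacc₂]
                  exact key_mul (by omega) (rank_lt_bnd (Q i) (some s₀))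
            refine hμNB i s₀ ⟨hQlt, ?_⟩
            rcases hor with hvac | ⟨j, hj, hij⟩
            · rw [F5a s₀ hts₀] at hvac; exact Or.inl hvac
            · exact Or.inr ⟨j, ((F3 j s₀).mp hj).1, hij⟩
          · have hνi : ν i = none := by
              cases hv : ν i with
              | none => rfl
              | some s' => exact absurd (F4 i s' hv) hpart
            rw [hνi, hRnon i hpart, trunc_rank_bad (Q i) (by simp), trunc_rank_none] at hlt
            have := rank_lt_bnd (Q i) none
            omega
      set ρ : Matching I S := DA E R with hρdef
      have hρSO : StudentOptimal E R ρ := DA_SO E R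
      have G0 : ∀ j s', ρ j = some s' →
          (TDAaux E t Q k j = none ∧ t s' = k + 1 ∧
            (Q j).rank (some s') < (Q j).rank none) := by
        intro j s' h
        have hIRρ := hρSO.1.2.1 j
        rw [h] at hIRρ
        by_cases hpart : TDAaux E t Q k j = none
        · rw [hRpart j hpart] at hIRρ
          obtain ⟨h1, h2⟩ := (trunc_acc_iff (Q j)).mp hIRρ
          exact ⟨hpart, h1, h2⟩
        · rw [hRnon j hpart] at hIRρ
          exact absurd ((trunc_acc_iff (Q j)).mp hIRρ).1 (by simp)
      have G1 : ∀ j, ρ j = none ↔ ν j = none := fun j => SO_matched_iff hρSO hstable j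
      have G2 : ∀ j s', ρ j = some s' →
          (reshuffle t (Q j)).rank (some s') ≤ (reshuffle t (Q j)).rank (μ j) := by
        intro j s' h
        obtain ⟨hpart, hts', hacc'⟩ := G0 j s' h
        have hdom := hρSO.2 ν hstable j
        have hν_some : ∃ s₁, ν j = some s₁ := by
          cases hv : ν j with
          | none =>
            have := (G1 j).mpr hv
            rw [h] at this
            exact absurd this (by simp)
          | some s₁ => exact ⟨s₁, rfl⟩
        obtain ⟨s₁, hv⟩ := hν_some
        obtain ⟨hm₁, hts₁⟩ := (F3 j s₁).mp hv
        have hacc₁ := F6 j s₁ hm₁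
        rw [h, hv, hRpart j hpart, trunc_rank_good (Q j) hts',
          trunc_rank_good (Q j) hts₁] at hdom
        rw [hm₁, resh_rank_acc t (Q j) hacc', resh_rank_acc t (Q j) hacc₁, hts', hts₁]
        omega
      set σ : Matching I S := fun j =>
        match ρ j with
        | some s' => some s'
        | none => μ j with hσdef
      have hσ1 : ∀ j, ρ j = none → σ j = μ j := by intro j h; simp [hσdef, h]
      have hσ2 : ∀ j s', ρ j = some s' → σ j = some s' := by
        intro j s' h; simp [hσdef, h]
      have G3a : ∀ j, (reshuffle t (Q j)).rank (σ j) ≤ (reshuffle t (Q j)).rank (μ j) := by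
        intro j
        cases h : ρ j with
        | none => rw [hσ1 j h]
        | some s' => rw [hσ2 j s' h]; exact G2 j s' h
      have G3b : ∀ j, (reshuffle t (Q j)).rank (σ j) ≤ (reshuffle t (Q j)).rank none := by
        intro j
        cases h : ρ j with
        | none => rw [hσ1 j h]; exact hμIR j
        | some s' =>
          rw [hσ2 j s' h]
          exact (resh_lt_none t (Q j) (G0 j s' h).2.2).le
      have G4a : ∀ s₀, t s₀ = k + 1 → assigned σ s₀ = assigned ρ s₀ := by
        intro s₀ h
        ext j
        rw [mem_assigned, mem_assigned]
        constructor
        · intro hj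
          cases hr : ρ j with
          | some s'' => rw [hσ2 j s'' hr] at hj; exact hj
          | none =>
            rw [hσ1 j hr] at hj
            have hν : ν j = some s₀ := (F3 j s₀).mpr ⟨hj, h⟩
            have := (G1 j).mp hr
            rw [hν] at this
            exact absurd this (by simp)
        · intro hj; exact hσ2 j s₀ hj
      have G4b : ∀ s₀, t s₀ ≠ k + 1 → assigned σ s₀ = assigned μ s₀ := by
        intro s₀ h
        ext j
        rw [mem_assigned, mem_assigned]
        constructor
        · intro hj
          cases hr : ρ j with
          | some s'' =>
            rw [hσ2 j s'' hr] at hj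
            injection hj with h'
            rw [← h'] at h
            exact absurd (G0 j s'' hr).2.1 h
          | none => rw [hσ1 j hr] at hj; exact hj
        · intro hj
          have hν : ν j = none := by
            cases hv : ν j with
            | none => rfl
            | some s'' =>
              obtain ⟨hm2, hts2⟩ := (F3 j s'').mp hv
              rw [hj] at hm2
              injection hm2 with h'
              rw [← h'] at hts2
              exact absurd hts2 h
          have hρn : ρ j = none := (G1 j).mpr hν
          rw [hσ1 j hρn]; exact hj
      have hσstable : Stable E (fun j => reshuffle t (Q j)) σ := by
        refine ⟨?_, G3b, ?_⟩
        · intro s₀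
          by_cases h : t s₀ = k + 1
          · rw [G4a s₀ h]; exact hρSO.1.1 s₀
          · rw [G4b s₀ h]; exact hμFeas s₀
        · rintro i₁ s₀ ⟨hlt, hor⟩
          have hacc₀ : (Q i₁).rank (some s₀) < (Q i₁).rank none :=
            (resh_acc_iff t (Q i₁)).mp (le_trans hlt.le (G3b i₁))
          by_cases hts₀ : t s₀ = k + 1
          · apply hρSO.1.2.2 i₁ s₀
            constructor
            · cases hr : ρ i₁ with
              | some s₁ =>
                obtain ⟨hpart, hts₁, hacc₁⟩ := G0 i₁ s₁ hr
                rw [hσ2 i₁ s₁ hr] at hlt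
                rw [resh_rank_acc t (Q i₁) hacc₀, resh_rank_acc t (Q i₁) hacc₁,
                  hts₀, hts₁] at hlt
                rw [hRpart i₁ hpart, trunc_rank_good (Q i₁) hts₀,
                  trunc_rank_good (Q i₁) hts₁]
                omega
              | none =>
                rw [hσ1 i₁ hr] at hlt
                by_cases hpart : TDAaux E t Q k i₁ = none
                · rw [hRpart i₁ hpart, trunc_rank_good (Q i₁) hts₀, trunc_rank_none]
                  exact hacc₀
                · exfalso
                  cases hk2 : TDAaux E t Q k i₁ with
                  | none => exact hpart hk2
                  | some s₂ =>
                    obtain ⟨hm₂, hts₂⟩ := (IH i₁ s₂).mp hk2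
                    have hacc₂ := F6 i₁ s₂ hm₂
                    rw [hm₂, resh_rank_acc t (Q i₁) hacc₀,
                      resh_rank_acc t (Q i₁) hacc₂] at hlt
                    have := key_mul (a := t s₂) (b := t s₀) (r := (Q i₁).rank (some s₂))
                      (r' := (Q i₁).rank (some s₀)) (by omega) (rank_lt_bnd (Q i₁) (some s₂))
                    omega
            · rcases hor with hvac | ⟨j, hj, hij⟩
              · rw [G4a s₀ hts₀] at hvac; exact Or.inl hvac
              · refine Or.inr ⟨j, ?_, hij⟩
                have hmem := mem_assigned.mpr hj
                rw [G4a s₀ hts₀] at hmem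
                exact mem_assigned.mp hmem
          · apply hμNB i₁ s₀
            constructor
            · exact lt_of_lt_of_le hlt (G3a i₁)
            · rcases hor with hvac | ⟨j, hj, hij⟩
              · rw [G4b s₀ hts₀] at hvac; exact Or.inl hvac
              · refine Or.inr ⟨j, ?_, hij⟩
                have hmem := mem_assigned.mpr hj
                rw [G4b s₀ hts₀] at hmem
                exact mem_assigned.mp hmem
      have hopt : ∀ ρ', Stable E R ρ' → ∀ i, (R i).rank (ν i) ≤ (R i).rank (ρ' i) := by
        intro ρ' hρ' i
        have h1 : (R i).rank (ρ i) ≤ (R i).rank (ρ' i) := hρSO.2 ρ' hρ' i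
        have h2 : (R i).rank (ν i) ≤ (R i).rank (ρ i) := by
          cases hr : ρ i with
          | none =>
            have hν : ν i = none := (G1 i).mp hr
            rw [hν]
          | some s' =>
            obtain ⟨hpart, hts', hacc'⟩ := G0 i s' hr
            have hover := hSO.2 σ hσstable i
            beta_reduce at hover
            rw [hσ2 i s' hr] at hover
            cases hm : μ i with
            | none =>
              have := resh_lt_none t (Q i) hacc'
              rw [hm] at hover
              omega
            | some s₂ =>
              have hacc₂ := F6 i s₂ hm
              have ht₂ := F2 i s₂ hpart hm
              rw [hm, resh_rank_acc t (Q i) hacc₂, resh_rank_acc t (Q i) hacc'] at hover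
              have hts₂ : t s₂ = k + 1 := by
                by_contra hc
                have := key_mul (a := t s') (b := t s₂) (r := (Q i).rank (some s'))
                  (r' := (Q i).rank (some s₂)) (by omega) (rank_lt_bnd (Q i) (some s'))
                omega
              have hQle : (Q i).rank (some s₂) ≤ (Q i).rank (some s') := by
                rw [hts₂, hts'] at hover
                omega
              have hνi : ν i = some s₂ := (F3 i s₂).mpr ⟨hm, hts₂⟩
              rw [hνi, hRpart i hpart, trunc_rank_good (Q i) hts₂,
                trunc_rank_good (Q i) hts']
              exact hQle
        omega
      have hνSO : StudentOptimal E R ν := ⟨hstable, hopt⟩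
      have hDA : DA E R = ν := DA_eq_of_SO hνSO
      intro i s
      cases hk : TDAaux E t Q k i with
      | some s' =>
        have hstep : TDAaux E t Q (k+1) i = some s' := by
          simp only [TDAaux]
          rw [hk]
        obtain ⟨hm', hts'⟩ := (IH i s').mp hk
        rw [hstep]
        constructor
        · intro h
          injection h with h'
          rw [← h']
          exact ⟨hm', by omega⟩
        · rintro ⟨h, _⟩
          rw [hm'] at h
          injection h with h'
          rw [h']
      | none =>
        have hstep : TDAaux E t Q (k+1) i = ν i := by
          simp only [TDAaux]
          rw [hk]
          rw [← hRdef]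
          exact congrFun hDA i
        rw [hstep, F3 i s]
        constructor
        · rintro ⟨h1, h2⟩; exact ⟨h1, by omega⟩
        · rintro ⟨h1, h2⟩
          have := F2 i s hk h1
          exact ⟨h1, by omega⟩
  funext i
  show TDAaux E t Q (Finset.univ.sup t) i = μ i
  cases hm : μ i with
  | some s =>
    rw [(key (Finset.univ.sup t) i s).mpr ⟨hm, Finset.le_sup (Finset.mem_univ s)⟩]
  | none =>
    cases h2 : TDAaux E t Q (Finset.univ.sup t) i with
    | none => rfl
    | some s =>
      have := ((key _ i s).mp h2).1
      rw [hm] at this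
      exact absurd this (by simp)

/-- `TDA(t)(Q) = TDA(t)(Q̃) = DA(Q̃)` where `Q̃` is the reshuffled profile. -/
theorem TDA_eq_DA_reshuffle
    (E : Prio I S) (t : S → ℕ) (T : ℕ) (ht : IsTierStructure t T)
    (Q : I → Pref S) :
    TDA E t Q = TDA E t (fun i => reshuffle t (Q i)) ∧
    TDA E t Q = DA E (fun i => reshuffle t (Q i)) := by
  have ht1 : ∀ s, 1 ≤ t s := fun s => (ht.1 s).1
  have h2 : TDA E t Q = DA E (fun i => reshuffle t (Q i)) :=
    TDA_eq_DA_resh E t Q ht1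
  have h3 : TDA E t (fun i => reshuffle t (Q i)) =
      DA E (fun i => reshuffle t (reshuffle t (Q i))) :=
    TDA_eq_DA_resh E t _ ht1
  have h4 : DA E (fun i => reshuffle t (reshuffle t (Q i))) =
      DA E (fun i => reshuffle t (Q i)) :=
    DA_congr (fun i => equivAcc_resh_resh t (Q i))
  exact ⟨by rw [h2, h3, h4], h2⟩

end SchoolChoice
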